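/- Let R ⊆ A be an order in a Dedekind domain A with conductor c. If a prime ideal p of R is invertible, then p is coprime to c (p + c = R), and conversely every prime of R coprime to c is invertible. -/

import Mathlib

/-- Let `R ⊆ A` be an order in a Dedekind domain `A` (same fraction field `K`, `A`
finite over `R`), with conductor `c = { x ∈ R : xA ⊆ R }`.  A prime ideal `p` of `R`
is invertible if and only if `p` is coprime to the conductor: `p + c = R`. -/
theorem stmt_9 {R A K : Type*} [CommRing R] [IsDomain R] [CommRing A] [IsDomain A]
    [IsDedekindDomain A] [Field K] [Algebra R A] [Algebra R K] [Algebra A K]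
    [IsScalarTower R A K] [IsFractionRing R K] [IsFractionRing A K]
    [Module.Finite R A]
    (c : Ideal R)
    (hc : ∀ x : R, x ∈ c ↔ ∀ a : A, algebraMap R A x * a ∈ (algebraMap R A).range)
    (p : Ideal R) (hp : p.IsPrime) (hp0 : p ≠ ⊥) :
    IsUnit (p : FractionalIdeal (nonZeroDivisors R) K) ↔ p ⊔ c = ⊤ := by
  classical
  haveI := hp
  have hgf : ∀ r : R, algebraMap A K (algebraMap R A r) = algebraMap R K r :=
    fun r => (IsScalarTower.algebraMap_apply R A K r).symm
  have ginj : Function.Injective (algebraMap A K) := IsFractionRing.injective A K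
  have finj : Function.Injective (algebraMap R K) := IsFractionRing.injective R K
  have ainj : Function.Injective (algebraMap R A) := fun a b h =>
    finj (by rw [← hgf, ← hgf, h])
  haveI hint : Algebra.IsIntegral R A := Algebra.IsIntegral.of_finite R A
  -- the conductor is stable under multiplication by `A`
  have hstab : ∀ x ∈ c, ∀ a : A, ∃ x' ∈ c, algebraMap R A x * a = algebraMap R A x' := by
    intro x hx a
    obtain ⟨x', hx'⟩ := (hc x).mp hx a
    refine ⟨x', (hc x').mpr fun b => ?_, hx'.symm⟩
    obtain ⟨y, hy⟩ := (hc x).mp hx (a * b)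
    exact ⟨y, by rw [hy, hx', mul_assoc]⟩
  -- `p` is maximal, lying under a maximal ideal `P` of `A`
  have hker : RingHom.ker (algebraMap R A) ≤ p := by
    rw [(RingHom.injective_iff_ker_eq_bot _).mp ainj]; exact bot_le
  obtain ⟨P, hPprime, hPcomap⟩ :=
    Ideal.exists_ideal_over_prime_of_isIntegral_of_isDomain p hker
  haveI := hPprime
  have hPne : P ≠ ⊥ := by
    intro h
    apply hp0
    rw [← hPcomap, h, ← RingHom.ker_eq_comap_bot,
      (RingHom.injective_iff_ker_eq_bot _).mp ainj]
  haveI hPmax : P.IsMaximal := Ideal.IsPrime.isMaximal hPprime hPne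
  have hpm : p.IsMaximal := hPcomap ▸ Ideal.isMaximal_comap_of_isIntegral_of_isMaximal P
  -- the conductor is nonzero
  have hdne : ∃ d : R, d ≠ 0 ∧ d ∈ c := by
    obtain ⟨s, hs⟩ := Module.Finite.fg_top (R := R) (M := A)
    obtain ⟨b, hb⟩ := IsLocalization.exist_integer_multiples_of_finset (nonZeroDivisors R)
      (s.image (algebraMap A K))
    have key : ∀ a' ∈ Submodule.span R (s : Set A),
        ∃ r : R, algebraMap R K r = algebraMap R K (b : R) * algebraMap A K a' := by
      intro a' ha'
      induction ha' using Submodule.span_induction with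
      | mem z hz =>
        obtain ⟨r, hr⟩ := hb (algebraMap A K z) (Finset.mem_image_of_mem _ hz)
        exact ⟨r, by rw [hr, Algebra.smul_def]⟩
      | zero => exact ⟨0, by simp⟩
      | add u v hu hv hu' hv' =>
        obtain ⟨r1, hr1⟩ := hu'
        obtain ⟨r2, hr2⟩ := hv'
        exact ⟨r1 + r2, by rw [map_add, map_add, hr1, hr2, mul_add]⟩
      | smul r z hz hz' =>
        obtain ⟨r0, hr0⟩ := hz'
        refine ⟨r * r0, ?_⟩
        rw [map_mul, hr0, Algebra.smul_def r z, map_mul, hgf]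
        ring
    refine ⟨(b : R), nonZeroDivisors.coe_ne_zero b, (hc (b : R)).mpr fun a => ?_⟩
    obtain ⟨r, hr⟩ := key a (by rw [hs]; trivial)
    refine ⟨r, ginj ?_⟩
    rw [hgf, hr, map_mul, hgf]
  constructor
  · -- invertible → coprime to conductor
    intro hu
    by_contra hne
    have hcp : c ≤ p := by
      have h2 := hpm.eq_of_le hne le_sup_left
      exact le_sup_right.trans h2.symm.le
    obtain ⟨u, hu'⟩ := hu
    have hPQ : (p : FractionalIdeal (nonZeroDivisors R) K) *
        (↑u⁻¹ : FractionalIdeal (nonZeroDivisors R) K) = 1 := by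
      rw [← hu']; exact u.mul_inv
    have hone : ∀ β ∈ (↑u⁻¹ : FractionalIdeal (nonZeroDivisors R) K), ∀ x' ∈ c,
        ∃ r : R, algebraMap R K r = β * algebraMap R K x' := by
      intro β hβ x' hx'
      have hmem : β * algebraMap R K x' ∈ (1 : FractionalIdeal (nonZeroDivisors R) K) := by
        have h := FractionalIdeal.mul_mem_mul hβ
          (FractionalIdeal.mem_coeIdeal_of_mem _ (hcp hx'))
        rwa [mul_comm (↑u⁻¹ : FractionalIdeal (nonZeroDivisors R) K), hPQ] at h
      exact (FractionalIdeal.mem_one_iff _).mp hmem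
    have hQC : ∀ β ∈ (↑u⁻¹ : FractionalIdeal (nonZeroDivisors R) K), ∀ x ∈ c,
        β * algebraMap R K x ∈ (c : FractionalIdeal (nonZeroDivisors R) K) := by
      intro β hβ x hx
      obtain ⟨r, hr⟩ := hone β hβ x hx
      refine (FractionalIdeal.mem_coeIdeal _).mpr ⟨r, ?_, hr⟩
      rw [hc]; intro a
      obtain ⟨x', hx'c, hxa⟩ := hstab x hx a
      obtain ⟨s', hs'⟩ := hone β hβ x' hx'c
      refine ⟨s', ginj ?_⟩
      rw [hgf, hs', ← hgf x', ← hxa, map_mul, map_mul, hgf, hgf, hr]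
      ring
    have hQC' : (↑u⁻¹ : FractionalIdeal (nonZeroDivisors R) K) * ↑c ≤ ↑c :=
      FractionalIdeal.mul_le.mpr (fun β hβ j hj => by
        obtain ⟨x, hx, rfl⟩ := (FractionalIdeal.mem_coeIdeal _).mp hj
        exact hQC β hβ x hx)
    have hPC : ((p : FractionalIdeal (nonZeroDivisors R) K) *
        ((↑u⁻¹ : FractionalIdeal (nonZeroDivisors R) K) * ↑c)) ≤ ↑p * ↑c :=
      FractionalIdeal.mul_le.mpr (fun i hi j hj =>
        FractionalIdeal.mul_mem_mul hi (hQC' hj))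
    have hcc : c ≤ p * c := by
      rw [← FractionalIdeal.coeIdeal_le_coeIdeal K, FractionalIdeal.coeIdeal_mul]
      intro j hj
      have h1 : j ∈ ((p : FractionalIdeal (nonZeroDivisors R) K) * ↑u⁻¹) * ↑c := by
        rw [hPQ, one_mul]; exact hj
      rw [mul_assoc] at h1
      exact hPC h1
    have hmaple : Ideal.map (algebraMap R A) c ≤
        Ideal.map (algebraMap R A) p • Ideal.map (algebraMap R A) c := by
      rw [smul_eq_mul, ← Ideal.map_mul]
      exact Ideal.map_mono hcc
    obtain ⟨r, hr1, hr2⟩ :=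
      Submodule.exists_sub_one_mem_and_smul_eq_zero_of_fg_of_le_smul _ _
        (IsNoetherian.noetherian _) hmaple
    obtain ⟨d, hd0, hdc⟩ := hdne
    have hdm : algebraMap R A d ∈ Ideal.map (algebraMap R A) c :=
      Ideal.mem_map_of_mem _ hdc
    have hz := hr2 _ hdm
    rw [smul_eq_mul, mul_eq_zero] at hz
    have hr0 : r = 0 := hz.resolve_right (fun h => hd0 (ainj (by rw [h, map_zero])))
    rw [hr0, zero_sub] at hr1
    have h1 : (1 : A) ∈ Ideal.map (algebraMap R A) p := by
      simpa using (Ideal.map (algebraMap R A) p).neg_mem hr1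
    have h2 : (1 : A) ∈ P := (Ideal.map_le_iff_le_comap.mpr hPcomap.ge) h1
    exact hPprime.ne_top ((Ideal.eq_top_iff_one _).mpr h2)
  · -- coprime to conductor → invertible
    intro hsup
    obtain ⟨y, hy, x, hx, hyx⟩ := Submodule.mem_sup.mp
      (show (1 : R) ∈ p ⊔ c by rw [hsup]; trivial)
    have hxp : x ∉ p := fun h =>
      hp.ne_top ((Ideal.eq_top_iff_one _).mpr (by rw [← hyx]; exact p.add_mem hy h))
    have hP0 : (p : FractionalIdeal (nonZeroDivisors R) K) ≠ 0 :=
      FractionalIdeal.coeIdeal_ne_zero.mpr hp0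
    have hle1 : (p : FractionalIdeal (nonZeroDivisors R) K) *
        (1 / (p : FractionalIdeal (nonZeroDivisors R) K)) ≤ 1 :=
      FractionalIdeal.mul_one_div_le_one
    obtain ⟨e, he⟩ := FractionalIdeal.le_one_iff_exists_coeIdeal.mp hle1
    have honeP : (1 : FractionalIdeal (nonZeroDivisors R) K) ≤
        1 / (p : FractionalIdeal (nonZeroDivisors R) K) :=
      (FractionalIdeal.le_div_iff_mul_le hP0).mpr
        (by rw [one_mul]; exact FractionalIdeal.coeIdeal_le_one)
    have hpe : p ≤ e := by
      rw [← FractionalIdeal.coeIdeal_le_coeIdeal K, he]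
      intro i hi
      have : i * 1 ∈ (p : FractionalIdeal (nonZeroDivisors R) K) *
          (1 / (p : FractionalIdeal (nonZeroDivisors R) K)) :=
        FractionalIdeal.mul_mem_mul hi (honeP (FractionalIdeal.one_mem_one _))
      rwa [mul_one] at this
    by_cases heq : e = ⊤
    · rw [heq, FractionalIdeal.coeIdeal_top] at he
      exact IsUnit.of_mul_eq_one _ he.symm
    -- now `P * (1/P) = p`; derive a contradiction with `x ∉ p`
    exfalso
    have hpem : (p : FractionalIdeal (nonZeroDivisors R) K) *
        (1 / (p : FractionalIdeal (nonZeroDivisors R) K)) =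
        (p : FractionalIdeal (nonZeroDivisors R) K) := by
      rw [← he, ← hpm.eq_of_le heq hpe]
    obtain ⟨y0, hy0, hy00⟩ := Submodule.exists_mem_ne_zero_of_ne_bot hp0
    have hpA0 : Ideal.map (algebraMap R A) p ≠ ⊥ := by
      intro h
      have hm := Ideal.mem_map_of_mem (algebraMap R A) hy0
      rw [h] at hm
      exact hy00 (ainj (by simpa using hm))
    have hJmul : (↑(Ideal.map (algebraMap R A) p) : FractionalIdeal (nonZeroDivisors A) K) *
        (↑(Ideal.map (algebraMap R A) p) : FractionalIdeal (nonZeroDivisors A) K)⁻¹ = 1 :=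
      mul_inv_cancel₀ (FractionalIdeal.coeIdeal_ne_zero.mpr hpA0)
    -- `x • (pA)⁻¹` lands in `1/p`
    have hz : ∀ β ∈ (↑(Ideal.map (algebraMap R A) p) :
        FractionalIdeal (nonZeroDivisors A) K)⁻¹,
        algebraMap R K x * β ∈ 1 / (p : FractionalIdeal (nonZeroDivisors R) K) := by
      intro β hβ
      rw [FractionalIdeal.mem_div_iff_of_ne_zero hP0]
      intro w hw
      obtain ⟨y', hy', rfl⟩ := (FractionalIdeal.mem_coeIdeal _).mp hw
      have h1 : β * algebraMap R K y' ∈ (1 : FractionalIdeal (nonZeroDivisors A) K) := by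
        have hmem : algebraMap R K y' ∈ (↑(Ideal.map (algebraMap R A) p) :
            FractionalIdeal (nonZeroDivisors A) K) :=
          (FractionalIdeal.mem_coeIdeal _).mpr
            ⟨algebraMap R A y', Ideal.mem_map_of_mem _ hy', hgf y'⟩
        have h2 := FractionalIdeal.mul_mem_mul hβ hmem
        rwa [mul_comm, hJmul] at h2
      obtain ⟨a, ha⟩ := (FractionalIdeal.mem_one_iff _).mp h1
      obtain ⟨x', hx'c, hxa⟩ := hstab x hx a
      refine (FractionalIdeal.mem_one_iff _).mpr ⟨x', ?_⟩
      rw [← hgf x', ← hxa, map_mul, hgf, ha]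
      ring
    -- each `x • β` is integral over `A`, hence in `A`
    haveI : NoZeroSMulDivisors A K := ⟨fun {a y} h => by
      rw [Algebra.smul_def, mul_eq_zero, map_eq_zero_iff _ ginj] at h; exact h⟩
    have hint2 : ∀ β ∈ (↑(Ideal.map (algebraMap R A) p) :
        FractionalIdeal (nonZeroDivisors A) K)⁻¹,
        ∃ a : A, algebraMap A K a = algebraMap R K x * β := by
      intro β hβ
      have hNAfg : (IsLocalization.coeSubmodule K (Ideal.map (algebraMap R A) p)).FG :=
        Submodule.FG.map _ (IsNoetherian.noetherian _)
      have hNAne : IsLocalization.coeSubmodule K (Ideal.map (algebraMap R A) p) ≠ ⊥ := by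
        obtain ⟨b, hb, hb0⟩ := Submodule.exists_mem_ne_zero_of_ne_bot hpA0
        intro h
        have : algebraMap A K b ∈ (⊥ : Submodule A K) := by
          rw [← h]; exact ⟨b, hb, rfl⟩
        exact hb0 (ginj (by simpa using this))
      have hstabN : ∀ n ∈ IsLocalization.coeSubmodule K (Ideal.map (algebraMap R A) p),
          (algebraMap R K x * β) • n ∈
            IsLocalization.coeSubmodule K (Ideal.map (algebraMap R A) p) := by
        rintro n ⟨b, hb, rfl⟩
        have hb' : b ∈ Submodule.span A ((algebraMap R A) '' (p : Set R)) := hb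
        clear hb
        simp only [smul_eq_mul]
        induction hb' using Submodule.span_induction with
        | mem z hz' =>
          obtain ⟨y', hy', rfl⟩ := hz'
          have hmm : (algebraMap R K x * β) * algebraMap R K y' ∈
              (p : FractionalIdeal (nonZeroDivisors R) K) := by
            have h3 := FractionalIdeal.mul_mem_mul (hz β hβ)
              (FractionalIdeal.mem_coeIdeal_of_mem _ hy')
            rwa [mul_comm (1 / (p : FractionalIdeal (nonZeroDivisors R) K)), hpem] at h3
          obtain ⟨y'', hy'', hyy⟩ := (FractionalIdeal.mem_coeIdeal _).mp hmm
          refine ⟨algebraMap R A y'', Ideal.mem_map_of_mem _ hy'', ?_⟩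
          simp only [Algebra.linearMap_apply]
          rw [hgf, hyy, hgf]
        | zero =>
          simp only [map_zero, mul_zero]
          exact Submodule.zero_mem _
        | add u v hu hv hu' hv' =>
          simp only [map_add, mul_add]
          exact Submodule.add_mem _ hu' hv'
        | smul a z hzz hz'' =>
          have : (algebraMap R K x * β) * (Algebra.linearMap A K) (a • z) =
              a • ((algebraMap R K x * β) * (Algebra.linearMap A K) z) := by
            simp only [Algebra.linearMap_apply, map_smul, Algebra.smul_def, map_mul,
              Algebra.algebraMap_self, RingHom.id_apply]
            ring
          rw [this]
          exact Submodule.smul_mem _ a hz''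
      have hii := isIntegral_of_smul_mem_submodule
        (IsLocalization.coeSubmodule K (Ideal.map (algebraMap R A) p)) hNAne hNAfg
        (algebraMap R K x * β) hstabN
      exact IsIntegrallyClosed.isIntegral_iff.mp hii
    -- hence `x ∈ pA`
    have hxpA : algebraMap R A x ∈ Ideal.map (algebraMap R A) p := by
      have hone1 : (1 : K) ∈ ((↑(Ideal.map (algebraMap R A) p) :
          FractionalIdeal (nonZeroDivisors A) K) : Submodule A K) *
          ((↑(Ideal.map (algebraMap R A) p) :
          FractionalIdeal (nonZeroDivisors A) K)⁻¹ : FractionalIdeal (nonZeroDivisors A) K) := by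
        have h0 : (1 : K) ∈ ((↑(Ideal.map (algebraMap R A) p) :
            FractionalIdeal (nonZeroDivisors A) K) *
            (↑(Ideal.map (algebraMap R A) p) :
            FractionalIdeal (nonZeroDivisors A) K)⁻¹ : FractionalIdeal (nonZeroDivisors A) K) := by
          rw [hJmul]; exact FractionalIdeal.one_mem_one _
        rw [← FractionalIdeal.mem_coe, FractionalIdeal.coe_mul] at h0
        exact h0
      have hgen : algebraMap R K x * 1 ∈
          IsLocalization.coeSubmodule K (Ideal.map (algebraMap R A) p) := by
        refine Submodule.mul_induction_on hone1 ?_ ?_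
        · rintro m ⟨b, hb, rfl⟩ n hn
          obtain ⟨a, ha⟩ := hint2 n hn
          refine ⟨a * b, Ideal.mul_mem_left _ a hb, ?_⟩
          simp only [Algebra.linearMap_apply, map_mul]
          rw [ha]
          ring
        · intro u v hu hv
          rw [mul_add]
          exact Submodule.add_mem _ hu hv
      rw [mul_one] at hgen
      obtain ⟨b, hb, hbe⟩ := hgen
      have : b = algebraMap R A x := ginj (by simpa only [Algebra.linearMap_apply, hgf] using hbe)
      rwa [← this]
    -- conclude `x * x ∈ p`, contradiction
    have hkey : ∀ b ∈ Submodule.span A ((algebraMap R A) '' (p : Set R)), ∀ x'' ∈ c,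
        ∃ y' ∈ p, algebraMap R A x'' * b = algebraMap R A y' := by
      intro b hb
      induction hb using Submodule.span_induction with
      | mem z hz' =>
        obtain ⟨y₀, hy₀, rfl⟩ := hz'
        intro x'' _
        exact ⟨x'' * y₀, Ideal.mul_mem_left _ _ hy₀, by rw [map_mul]⟩
      | zero => exact fun x'' _ => ⟨0, p.zero_mem, by rw [mul_zero, map_zero]⟩
      | add u v hu hv hu' hv' =>
        intro x'' hx''
        obtain ⟨y1, hy1, e1⟩ := hu' x'' hx''
        obtain ⟨y2, hy2, e2⟩ := hv' x'' hx''
        exact ⟨y1 + y2, p.add_mem hy1 hy2, by rw [mul_add, e1, e2, map_add]⟩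
      | smul a z hzz hz'' =>
        intro x'' hx''
        obtain ⟨x₂, hx₂, hxe⟩ := hstab x'' hx'' a
        obtain ⟨y', hy', he'⟩ := hz'' x₂ hx₂
        refine ⟨y', hy', ?_⟩
        rw [smul_eq_mul, ← mul_assoc, hxe]
        exact he'
    have hxspan : algebraMap R A x ∈ Submodule.span A ((algebraMap R A) '' (p : Set R)) := hxpA
    obtain ⟨y', hy', he'⟩ := hkey _ hxspan x hx
    have hxx : x * x ∈ p := by
      have h5 : algebraMap R A (x * x) = algebraMap R A y' := by rw [map_mul]; exact he'
      rw [ainj h5]; exact hy'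
    exact hxp ((hp.mem_or_mem hxx).elim id id)
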